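/- Let F be a cumulative distribution function with ∫_{−∞}^0 F(y) dy < ∞, and let α ∈ (0,1). Then for every z ∈ ℝ, z − (1/α)∫_{−∞}^{z} F(y) dy ≤ CVaR_α(F), with equality at z = VaR_α(F); that is, CVaR_α(F) = sup_{z ∈ ℝ} [ z − (1/α)∫_{−∞}^{z} F(y) dy ]. -/

import Mathlib

open MeasureTheory

/-- A cumulative distribution function: nondecreasing, right-continuous,
tending to `0` at `−∞` and to `1` at `+∞`. -/
def IsCDF (F : ℝ → ℝ) : Prop :=
  Monotone F ∧ (∀ y : ℝ, ContinuousWithinAt F (Set.Ici y) y) ∧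
    Filter.Tendsto F Filter.atBot (nhds 0) ∧ Filter.Tendsto F Filter.atTop (nhds 1)

/-- Value-at-risk at level `α`: `VaR_α(F) = inf{ y : F y ≥ α }`. -/
noncomputable def VaR (α : ℝ) (F : ℝ → ℝ) : ℝ :=
  sInf {y : ℝ | α ≤ F y}

/-- Conditional value-at-risk at level `α`:
`CVaR_α(F) = VaR_α(F) − (1/α) ∫_{−∞}^{VaR_α(F)} F(y) dy`. -/
noncomputable def CVaR (α : ℝ) (F : ℝ → ℝ) : ℝ :=
  VaR α F - (1 / α) * ∫ y in Set.Iio (VaR α F), F y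

/-- The variational (Rockafellar–Uryasev) representation of CVaR:
`z − (1/α)∫_{−∞}^z F ≤ CVaR_α(F)` for every `z`, with equality at
`z = VaR_α(F)`, i.e. `CVaR_α(F) = sup_z [z − (1/α)∫_{−∞}^z F]`. -/
theorem CVaR_sup_representation (F : ℝ → ℝ) (hF : IsCDF F)
    (hInt : IntegrableOn F (Set.Iic (0 : ℝ)))
    (α : ℝ) (hα : α ∈ Set.Ioo (0 : ℝ) 1) :
    (∀ z : ℝ, z - (1 / α) * ∫ y in Set.Iio z, F y ≤ CVaR α F) ∧
      CVaR α F = ⨆ z : ℝ, (z - (1 / α) * ∫ y in Set.Iio z, F y) := by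
  obtain ⟨hα0, hα1⟩ := hα
  obtain ⟨hmono, hrc, hbot, htop⟩ := hF
  -- integrability on every Iio z
  have hIntIio : ∀ z : ℝ, IntegrableOn F (Set.Iio z) := by
    intro z
    rcases le_or_gt z 0 with hz | hz
    · exact hInt.mono_set (Set.Iio_subset_Iic_self.trans (Set.Iic_subset_Iic.2 hz))
    · have h1 : IntegrableOn F (Set.Icc 0 z) :=
        (hmono.monotoneOn _).integrableOn_isCompact isCompact_Icc
      have : IntegrableOn F (Set.Iic 0 ∪ Set.Icc 0 z) := hInt.union h1
      exact this.mono_set (fun x hx => by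
        rcases le_or_gt x 0 with h | h
        · exact Or.inl h
        · exact Or.inr ⟨h.le, (le_of_lt hx)⟩)
  set v : ℝ := VaR α F with hv
  set S : Set ℝ := {y : ℝ | α ≤ F y} with hS
  have hSne : S.Nonempty := by
    obtain ⟨y, hy⟩ := (htop.eventually (eventually_gt_nhds hα1)).exists
    exact ⟨y, hy.le⟩
  have hSbdd : BddBelow S := by
    obtain ⟨y0, hy0⟩ := (hbot.eventually (eventually_lt_nhds hα0)).exists
    refine ⟨y0, fun y hy => ?_⟩
    by_contra h
    push_neg at h
    exact absurd (le_trans hy (hmono h.le)) (not_le.2 hy0)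
  -- F v ≥ α
  have hge : ∀ y, v < y → α ≤ F y := by
    intro y hy
    obtain ⟨s, hs, hsy⟩ := (csInf_lt_iff hSbdd hSne).1 hy
    exact le_trans hs (hmono hsy.le)
  have hFv : α ≤ F v := by
    have htendsto : Filter.Tendsto F (nhdsWithin v (Set.Ioi v)) (nhds (F v)) :=
      (hrc v).mono_left (nhdsWithin_mono _ Set.Ioi_subset_Ici_self)
    refine ge_of_tendsto htendsto ?_
    filter_upwards [self_mem_nhdsWithin] with y hy using hge y hy
  have hlt : ∀ y, y < v → F y < α := by
    intro y hy
    by_contra h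
    push_neg at h
    exact absurd (csInf_le hSbdd h) (not_le.2 hy)
  -- key splitting of integrals
  have hsplit : ∀ a b : ℝ, a ≤ b →
      (∫ y in Set.Iio b, F y) = (∫ y in Set.Iio a, F y) + ∫ y in Set.Ico a b, F y := by
    intro a b hab
    rw [← setIntegral_union (by rw [Set.disjoint_left]; rintro x hx ⟨h1,h2⟩; exact absurd hx (not_lt.2 h1)) measurableSet_Ico
      (hIntIio a) ((hIntIio b).mono_set (Set.Ico_subset_Iio_self)),
      Set.Iio_union_Ico_eq_Iio hab]
  have hvol : ∀ a b : ℝ, a ≤ b → (∫ _ in Set.Ico a b, (α : ℝ)) = α * (b - a) := by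
    intro a b hab
    rw [setIntegral_const, Measure.real, Real.volume_Ico, ENNReal.toReal_ofReal (by linarith), smul_eq_mul, mul_comm]
  -- the key inequality
  have key : ∀ z : ℝ, z - (1 / α) * ∫ y in Set.Iio z, F y ≤
      v - (1 / α) * ∫ y in Set.Iio v, F y := by
    intro z
    rcases le_total z v with hzv | hvz
    · have hsp := hsplit z v hzv
      have hbound : (∫ y in Set.Ico z v, F y) ≤ α * (v - z) := by
        rw [← hvol z v hzv]
        refine setIntegral_mono_on ((hIntIio v).mono_set Set.Ico_subset_Iio_self)
          (integrableOn_const (by simp [Real.volume_Ico]))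
          measurableSet_Ico ?_
        intro x hx
        exact (hlt x hx.2).le
      have h1 : (1 / α) * (α * (v - z)) = v - z := by field_simp
      have h2 : (1 / α) * (∫ y in Set.Ico z v, F y) ≤ (1 / α) * (α * (v - z)) :=
        mul_le_mul_of_nonneg_left hbound (by positivity)
      rw [hsp]
      rw [h1] at h2
      linarith [h2, mul_add (1/α) (∫ y in Set.Iio z, F y) (∫ y in Set.Ico z v, F y)]
    · have hsp := hsplit v z hvz
      have hbound : α * (z - v) ≤ ∫ y in Set.Ico v z, F y := by
        rw [← hvol v z hvz]
        refine setIntegral_mono_on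
          (integrableOn_const (by simp [Real.volume_Ico]))
          ((hIntIio z).mono_set Set.Ico_subset_Iio_self)
          measurableSet_Ico ?_
        intro x hx
        exact le_trans hFv (hmono hx.1)
      have h1 : (1 / α) * (α * (z - v)) = z - v := by field_simp
      have h2 : (1 / α) * (α * (z - v)) ≤ (1 / α) * (∫ y in Set.Ico v z, F y) :=
        mul_le_mul_of_nonneg_left hbound (by positivity)
      rw [hsp]
      rw [h1] at h2
      linarith [h2, mul_add (1/α) (∫ y in Set.Iio v, F y) (∫ y in Set.Ico v z, F y)]
  have hCVaR : CVaR α F = v - (1 / α) * ∫ y in Set.Iio v, F y := rfl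
  refine ⟨fun z => by rw [hCVaR]; exact key z, ?_⟩
  rw [hCVaR]
  refine le_antisymm ?_ (ciSup_le key)
  exact le_ciSup ⟨v - (1 / α) * ∫ y in Set.Iio v, F y, by rintro _ ⟨z, rfl⟩; exact key z⟩ v
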